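/- Let g(x) with g(0)=1 satisfy g(x) = 1 + x·g(x)·B(x²·g(x)) where B(x) = Σ b_i xⁱ. Then for all n ≥ 0 and m ≥ 1: [xⁿ] g(x)^m = Σ over all tuples (m_0,...,m_p) of nonnegative integers with Σ_{i=0}^{p} m_i(2i+1) = n (where p = ⌊(n-1)/2⌋) of [m·(m+k-1)! / (m_0!·m_1!···m_p!·(m+k-q)!)] · b_0^{m_0}·b_1^{m_1}···b_p^{m_p}, where k = Σ m_i(i+1) and q = Σ m_i. -/

import Mathlib

open PowerSeries

/-- Substitution of the power series `g` (with zero constant term) into `f`. -/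
noncomputable def pscomp (f g : PowerSeries ℚ) : PowerSeries ℚ :=
  PowerSeries.mk fun N => ∑ n ∈ Finset.range (N + 1), coeff n f * coeff N (g ^ n)

/-- The weight of a tuple. -/
noncomputable def wgt (B : PowerSeries ℚ) {d : ℕ} (m : ℕ) (f : Fin d → ℕ) : ℚ :=
  (m : ℚ) * (m + (∑ i, f i * ((i : ℕ) + 1)) - 1).factorial /
    ((∏ i, ((f i).factorial : ℚ)) * (m + (∑ i, f i * ((i : ℕ) + 1)) - ∑ i, f i).factorial) *
    ∏ i : Fin d, (coeff (i : ℕ) B) ^ f i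

/-- The combinatorial sum. -/
noncomputable def U (B : PowerSeries ℚ) (d N n m : ℕ) : ℚ :=
  ∑ f ∈ Finset.filter (fun f : Fin d → ℕ => ∑ i, f i * (2 * (i : ℕ) + 1) = n)
      (Fintype.piFinset fun _ => Finset.range (N + 1)), wgt B m f

lemma fi_le {d n : ℕ} (f : Fin d → ℕ) (hf : ∑ i, f i * (2 * (i : ℕ) + 1) = n) (i : Fin d) :
    f i ≤ n := by
  have h1 : f i ≤ f i * (2 * (i : ℕ) + 1) := Nat.le_mul_of_pos_right _ (by omega)
  have h2 : f i * (2 * (i : ℕ) + 1) ≤ ∑ j, f j * (2 * (j : ℕ) + 1) :=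
    Finset.single_le_sum (f := fun j : Fin d => f j * (2 * (j : ℕ) + 1))
      (fun j _ => Nat.zero_le _) (Finset.mem_univ i)
  omega

lemma mem_pi_of_constraint {d n N : ℕ} (hnN : n ≤ N) (f : Fin d → ℕ)
    (hf : ∑ i, f i * (2 * (i : ℕ) + 1) = n) :
    f ∈ Fintype.piFinset fun _ : Fin d => Finset.range (N + 1) := by
  simp only [Fintype.mem_piFinset, Finset.mem_range]
  intro i
  have := fi_le f hf i
  omega

lemma U_zero (B : PowerSeries ℚ) (d N n : ℕ) : U B d N n 0 = 0 := by
  unfold U wgt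
  simp

lemma sum_ext {M : Type*} [AddCommMonoid M] {d d' : ℕ} (hdd : d ≤ d') (G : ℕ → ℕ → M)
    (hG : ∀ i, G i 0 = 0) (f : Fin d → ℕ) :
    ∑ i : Fin d', G (i : ℕ) (if h : (i : ℕ) < d then f ⟨i, h⟩ else 0) = ∑ i : Fin d, G (i : ℕ) (f i) := by
  set F : ℕ → M := fun i => G i (if h : i < d then f ⟨i, h⟩ else 0) with hF
  calc ∑ i : Fin d', F (i : ℕ) = ∑ i ∈ Finset.range d', F i := Fin.sum_univ_eq_sum_range F d'
    _ = ∑ i ∈ Finset.range d, F i := by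
        refine (Finset.sum_subset (Finset.range_subset_range.2 hdd) fun i _ hi => ?_).symm
        have hid : ¬ i < d := by simp only [Finset.mem_range] at hi; omega
        simp [hF, hid, hG]
    _ = ∑ i : Fin d, F (i : ℕ) := (Fin.sum_univ_eq_sum_range F d).symm
    _ = ∑ i : Fin d, G (i : ℕ) (f i) := by
        refine Finset.sum_congr rfl fun i _ => ?_
        simp [hF, i.isLt]

lemma prod_ext {M : Type*} [CommMonoid M] {d d' : ℕ} (hdd : d ≤ d') (G : ℕ → ℕ → M)
    (hG : ∀ i, G i 0 = 1) (f : Fin d → ℕ) :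
    ∏ i : Fin d', G (i : ℕ) (if h : (i : ℕ) < d then f ⟨i, h⟩ else 0) = ∏ i : Fin d, G (i : ℕ) (f i) := by
  set F : ℕ → M := fun i => G i (if h : i < d then f ⟨i, h⟩ else 0) with hF
  calc ∏ i : Fin d', F (i : ℕ) = ∏ i ∈ Finset.range d', F i := Fin.prod_univ_eq_prod_range F d'
    _ = ∏ i ∈ Finset.range d, F i := by
        refine (Finset.prod_subset (Finset.range_subset_range.2 hdd) fun i _ hi => ?_).symm
        have hid : ¬ i < d := by simp only [Finset.mem_range] at hi; omega
        simp [hF, hid, hG]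
    _ = ∏ i : Fin d, F (i : ℕ) := (Fin.prod_univ_eq_prod_range F d).symm
    _ = ∏ i : Fin d, G (i : ℕ) (f i) := by
        refine Finset.prod_congr rfl fun i _ => ?_
        simp [hF, i.isLt]

lemma sum_restrict {M : Type*} [AddCommMonoid M] {d d' n : ℕ} (hdd : d ≤ d') (hd : n ≤ 2 * d)
    (G : ℕ → ℕ → M) (hG : ∀ i, G i 0 = 0) (f : Fin d' → ℕ)
    (hf : ∑ i, f i * (2 * (i : ℕ) + 1) = n) :
    ∑ i : Fin d', G (i : ℕ) (f i) = ∑ i : Fin d, G (i : ℕ) (f (Fin.castLE hdd i)) := by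
  have hvanish : ∀ i : Fin d', d ≤ (i : ℕ) → f i = 0 := by
    intro i hi
    by_contra h
    have h1 : 2 * d + 1 ≤ f i * (2 * (i : ℕ) + 1) := by
      have : 1 ≤ f i := Nat.one_le_iff_ne_zero.2 h
      calc 2 * d + 1 ≤ 2 * (i : ℕ) + 1 := by omega
        _ = 1 * (2 * (i : ℕ) + 1) := (one_mul _).symm
        _ ≤ f i * (2 * (i : ℕ) + 1) := Nat.mul_le_mul_right _ this
    have h2 : f i * (2 * (i : ℕ) + 1) ≤ ∑ j, f j * (2 * (j : ℕ) + 1) :=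
      Finset.single_le_sum (f := fun j : Fin d' => f j * (2 * (j : ℕ) + 1))
        (fun j _ => Nat.zero_le _) (Finset.mem_univ i)
    rw [hf] at h2
    omega
  calc ∑ i : Fin d', G (i : ℕ) (f i)
      = ∑ i : Fin d', G (i : ℕ)
          (if h : (i : ℕ) < d then f (Fin.castLE hdd ⟨(i : ℕ), h⟩) else 0) := by
        refine Finset.sum_congr rfl fun i _ => ?_
        by_cases h : (i : ℕ) < d
        · rw [dif_pos h]
          congr 2
        · rw [dif_neg h, hvanish i (by omega)]
    _ = ∑ i : Fin d, G (i : ℕ) (f (Fin.castLE hdd i)) := by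
        exact sum_ext hdd G hG (fun j => f (Fin.castLE hdd j))

lemma prod_restrict {M : Type*} [CommMonoid M] {d d' n : ℕ} (hdd : d ≤ d') (hd : n ≤ 2 * d)
    (G : ℕ → ℕ → M) (hG : ∀ i, G i 0 = 1) (f : Fin d' → ℕ)
    (hf : ∑ i, f i * (2 * (i : ℕ) + 1) = n) :
    ∏ i : Fin d', G (i : ℕ) (f i) = ∏ i : Fin d, G (i : ℕ) (f (Fin.castLE hdd i)) := by
  have hvanish : ∀ i : Fin d', d ≤ (i : ℕ) → f i = 0 := by
    intro i hi
    by_contra h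
    have h1 : 2 * d + 1 ≤ f i * (2 * (i : ℕ) + 1) := by
      have : 1 ≤ f i := Nat.one_le_iff_ne_zero.2 h
      calc 2 * d + 1 ≤ 2 * (i : ℕ) + 1 := by omega
        _ = 1 * (2 * (i : ℕ) + 1) := (one_mul _).symm
        _ ≤ f i * (2 * (i : ℕ) + 1) := Nat.mul_le_mul_right _ this
    have h2 : f i * (2 * (i : ℕ) + 1) ≤ ∑ j, f j * (2 * (j : ℕ) + 1) :=
      Finset.single_le_sum (f := fun j : Fin d' => f j * (2 * (j : ℕ) + 1))
        (fun j _ => Nat.zero_le _) (Finset.mem_univ i)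
    rw [hf] at h2
    omega
  calc ∏ i : Fin d', G (i : ℕ) (f i)
      = ∏ i : Fin d', G (i : ℕ)
          (if h : (i : ℕ) < d then f (Fin.castLE hdd ⟨(i : ℕ), h⟩) else 0) := by
        refine Finset.prod_congr rfl fun i _ => ?_
        by_cases h : (i : ℕ) < d
        · rw [dif_pos h]
          congr 2
        · rw [dif_neg h, hvanish i (by omega)]
    _ = ∏ i : Fin d, G (i : ℕ) (f (Fin.castLE hdd i)) := by
        exact prod_ext hdd G hG (fun j => f (Fin.castLE hdd j))

lemma U_ext (B : PowerSeries ℚ) {d d' N N' n : ℕ} (m : ℕ)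
    (hd : n ≤ 2 * d) (hdd : d ≤ d') (hN : n ≤ N) (hN' : n ≤ N') :
    U B d N n m = U B d' N' n m := by
  unfold U
  refine Finset.sum_nbij' (fun f i => if h : (i : ℕ) < d then f ⟨i, h⟩ else 0)
    (fun f i => f (Fin.castLE hdd i)) ?_ ?_ ?_ ?_ ?_
  · intro f hf
    simp only [Finset.mem_filter] at hf ⊢
    have hc : ∑ i : Fin d', (if h : (i : ℕ) < d then f ⟨i, h⟩ else 0) * (2 * (i : ℕ) + 1) = n := by
      have h1 := sum_ext (M := ℕ) hdd (fun i v => v * (2 * i + 1)) (fun i => by ring) f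
      exact h1.trans hf.2
    exact ⟨mem_pi_of_constraint hN' _ hc, hc⟩
  · intro f hf
    simp only [Finset.mem_filter] at hf ⊢
    have hc : ∑ i : Fin d, f (Fin.castLE hdd i) * (2 * (i : ℕ) + 1) = n := by
      have h1 := sum_restrict (M := ℕ) hdd hd (fun i v => v * (2 * i + 1)) (fun i => by ring) f hf.2
      rw [← hf.2]
      exact h1.symm
    exact ⟨mem_pi_of_constraint hN _ hc, hc⟩
  · intro f hf
    funext i
    simp [i.isLt]
  · intro f hf
    simp only [Finset.mem_filter] at hf
    have hvanish : ∀ i : Fin d', d ≤ (i : ℕ) → f i = 0 := by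
      intro i hi
      by_contra h
      have h1 : 2 * d + 1 ≤ f i * (2 * (i : ℕ) + 1) := by
        have : 1 ≤ f i := Nat.one_le_iff_ne_zero.2 h
        calc 2 * d + 1 ≤ 2 * (i : ℕ) + 1 := by omega
          _ = 1 * (2 * (i : ℕ) + 1) := (one_mul _).symm
          _ ≤ f i * (2 * (i : ℕ) + 1) := Nat.mul_le_mul_right _ this
      have h2 : f i * (2 * (i : ℕ) + 1) ≤ ∑ j, f j * (2 * (j : ℕ) + 1) :=
        Finset.single_le_sum (f := fun j : Fin d' => f j * (2 * (j : ℕ) + 1))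
          (fun j _ => Nat.zero_le _) (Finset.mem_univ i)
      rw [hf.2] at h2
      omega
    funext i
    show (if h : (i : ℕ) < d then f (Fin.castLE hdd ⟨(i : ℕ), h⟩) else 0) = f i
    by_cases h : (i : ℕ) < d
    · rw [dif_pos h]
      congr 1
    · rw [dif_neg h]
      exact (hvanish i (by omega)).symm
  · intro f hf
    simp only [Finset.mem_filter] at hf
    have e1 : (∑ i : Fin d', (if h : (i : ℕ) < d then f ⟨i, h⟩ else 0) * ((i : ℕ) + 1)) =
        ∑ i : Fin d, f i * ((i : ℕ) + 1) := by
      exact sum_ext (M := ℕ) hdd (fun i v => v * (i + 1)) (fun i => by ring) f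
    have e2 : (∑ i : Fin d', (if h : (i : ℕ) < d then f ⟨i, h⟩ else 0)) = ∑ i : Fin d, f i := by
      exact sum_ext (M := ℕ) hdd (fun _ v => v) (fun i => rfl) f
    have e3 : (∏ i : Fin d', (((if h : (i : ℕ) < d then f ⟨i, h⟩ else 0).factorial : ℚ))) =
        ∏ i : Fin d, ((f i).factorial : ℚ) := by
      exact prod_ext (M := ℚ) hdd (fun _ v => (v.factorial : ℚ)) (fun i => by simp) f
    have e4 : (∏ i : Fin d', (coeff (i : ℕ) B) ^ (if h : (i : ℕ) < d then f ⟨i, h⟩ else 0)) =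
        ∏ i : Fin d, (coeff (i : ℕ) B) ^ f i := by
      exact prod_ext (M := ℚ) hdd (fun i v => (coeff i B) ^ v) (fun i => by simp) f
    unfold wgt
    beta_reduce
    rw [e1, e2, e3, e4]

lemma update_add_sum {D : ℕ} (jj : Fin D) (g : Fin D → ℕ) (c : ℕ) (w : Fin D → ℕ) :
    ∑ i, Function.update g jj (g jj + c) i * w i = (∑ i, g i * w i) + c * w jj := by
  have h1 := Finset.add_sum_erase Finset.univ
    (fun i => Function.update g jj (g jj + c) i * w i) (Finset.mem_univ jj)
  have h2 := Finset.add_sum_erase Finset.univ (fun i => g i * w i) (Finset.mem_univ jj)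
  beta_reduce at h1 h2
  have h3 : ∑ i ∈ Finset.univ.erase jj, Function.update g jj (g jj + c) i * w i =
      ∑ i ∈ Finset.univ.erase jj, g i * w i := by
    refine Finset.sum_congr rfl fun i hi => ?_
    rw [Function.update_of_ne (Finset.ne_of_mem_erase hi)]
  simp only [Function.update_self] at h1
  rw [h3, Nat.add_mul] at h1
  omega

lemma update_fact_prod {D : ℕ} (jj : Fin D) (g : Fin D → ℕ) :
    ∏ i : Fin D, ((Function.update g jj (g jj + 1) i).factorial : ℚ) =
      ((g jj : ℚ) + 1) * ∏ i : Fin D, ((g i).factorial : ℚ) := by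
  have h1 := Finset.mul_prod_erase Finset.univ
    (fun i : Fin D => ((Function.update g jj (g jj + 1) i).factorial : ℚ)) (Finset.mem_univ jj)
  have h2 := Finset.mul_prod_erase Finset.univ
    (fun i : Fin D => (((g i).factorial : ℚ))) (Finset.mem_univ jj)
  beta_reduce at h1 h2
  have h3 : ∏ i ∈ Finset.univ.erase jj, ((Function.update g jj (g jj + 1) i).factorial : ℚ) =
      ∏ i ∈ Finset.univ.erase jj, ((g i).factorial : ℚ) := by
    refine Finset.prod_congr rfl fun i hi => ?_
    rw [Function.update_of_ne (Finset.ne_of_mem_erase hi)]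
  simp only [Function.update_self] at h1
  rw [h3] at h1
  rw [← h1, ← h2, Nat.factorial_succ]
  push_cast
  ring

lemma update_pow_prod (B : PowerSeries ℚ) {D : ℕ} (jj : Fin D) (g : Fin D → ℕ) :
    ∏ i : Fin D, (coeff (i : ℕ) B) ^ (Function.update g jj (g jj + 1) i) =
      (coeff (jj : ℕ) B) * ∏ i : Fin D, (coeff (i : ℕ) B) ^ (g i) := by
  have h1 := Finset.mul_prod_erase Finset.univ
    (fun i : Fin D => (coeff (i : ℕ) B) ^ (Function.update g jj (g jj + 1) i))
    (Finset.mem_univ jj)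
  have h2 := Finset.mul_prod_erase Finset.univ
    (fun i : Fin D => (coeff (i : ℕ) B) ^ (g i)) (Finset.mem_univ jj)
  beta_reduce at h1 h2
  have h3 : ∏ i ∈ Finset.univ.erase jj, (coeff (i : ℕ) B) ^ (Function.update g jj (g jj + 1) i) =
      ∏ i ∈ Finset.univ.erase jj, (coeff (i : ℕ) B) ^ (g i) := by
    refine Finset.prod_congr rfl fun i hi => ?_
    rw [Function.update_of_ne (Finset.ne_of_mem_erase hi)]
  simp only [Function.update_self] at h1
  rw [h3] at h1
  rw [← h1, ← h2, pow_succ]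
  ring

lemma step1 (B : PowerSeries ℚ) {D : ℕ} (n m j : ℕ) (hj : j < D) (h2j : 2 * j + 1 ≤ n) :
    coeff j B * U B D n (n - 1 - 2 * j) (m + 1 + j) =
      ∑ f ∈ Finset.filter (fun f : Fin D → ℕ => ∑ i, f i * (2 * (i : ℕ) + 1) = n)
          (Fintype.piFinset fun _ => Finset.range (n + 1)),
        (if 1 ≤ f ⟨j, hj⟩ then
          (f ⟨j, hj⟩ : ℚ) * ((m : ℚ) + 1 + j) *
            (((m + (∑ i, f i * ((i : ℕ) + 1)) - 1).factorial : ℚ) /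
              ((∏ i : Fin D, ((f i).factorial : ℚ)) *
                ((m + 1 + (∑ i, f i * ((i : ℕ) + 1)) - ∑ i, f i).factorial : ℚ)) *
              ∏ i : Fin D, (coeff (i : ℕ) B) ^ f i)
        else 0) := by
  have hsplit : Finset.filter
        (fun f : Fin D → ℕ => ∑ i, f i * (2 * (i : ℕ) + 1) = n ∧ 1 ≤ f ⟨j, hj⟩)
        (Fintype.piFinset fun _ => Finset.range (n + 1)) =
      Finset.filter (fun f : Fin D → ℕ => 1 ≤ f ⟨j, hj⟩)
        (Finset.filter (fun f : Fin D → ℕ => ∑ i, f i * (2 * (i : ℕ) + 1) = n)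
          (Fintype.piFinset fun _ => Finset.range (n + 1))) := by
    rw [Finset.filter_filter]
  rw [U, Finset.mul_sum]
  rw [show (∑ f ∈ Finset.filter (fun f : Fin D → ℕ => ∑ i, f i * (2 * (i : ℕ) + 1) = n)
          (Fintype.piFinset fun _ => Finset.range (n + 1)),
        (if 1 ≤ f ⟨j, hj⟩ then
          (f ⟨j, hj⟩ : ℚ) * ((m : ℚ) + 1 + j) *
            (((m + (∑ i, f i * ((i : ℕ) + 1)) - 1).factorial : ℚ) /
              ((∏ i : Fin D, ((f i).factorial : ℚ)) *
                ((m + 1 + (∑ i, f i * ((i : ℕ) + 1)) - ∑ i, f i).factorial : ℚ)) *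
              ∏ i : Fin D, (coeff (i : ℕ) B) ^ f i)
        else 0)) =
      ∑ f ∈ Finset.filter
          (fun f : Fin D → ℕ => ∑ i, f i * (2 * (i : ℕ) + 1) = n ∧ 1 ≤ f ⟨j, hj⟩)
          (Fintype.piFinset fun _ => Finset.range (n + 1)),
        (f ⟨j, hj⟩ : ℚ) * ((m : ℚ) + 1 + j) *
          (((m + (∑ i, f i * ((i : ℕ) + 1)) - 1).factorial : ℚ) /
            ((∏ i : Fin D, ((f i).factorial : ℚ)) *
              ((m + 1 + (∑ i, f i * ((i : ℕ) + 1)) - ∑ i, f i).factorial : ℚ)) *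
            ∏ i : Fin D, (coeff (i : ℕ) B) ^ f i) from by
    rw [hsplit, Finset.sum_filter, Finset.sum_filter, Finset.sum_filter]]
  refine Finset.sum_nbij (fun f => Function.update f ⟨j, hj⟩ (f ⟨j, hj⟩ + 1)) ?_ ?_ ?_ ?_
  · intro f hf
    simp only [Finset.mem_filter] at hf ⊢
    have hc : ∑ i, Function.update f ⟨j, hj⟩ (f ⟨j, hj⟩ + 1) i * (2 * (i : ℕ) + 1) = n := by
      rw [update_add_sum ⟨j, hj⟩ f 1 (fun i => 2 * (i : ℕ) + 1)]
      have h4 := hf.2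
      have h5 : ((⟨j, hj⟩ : Fin D) : ℕ) = j := rfl
      simp only [h5]
      omega
    refine ⟨mem_pi_of_constraint le_rfl _ hc, hc, ?_⟩
    rw [Function.update_self]
    omega
  · intro f hf f' hf' heq
    beta_reduce at heq
    funext i
    by_cases h : i = (⟨j, hj⟩ : Fin D)
    · have h6 := congrFun heq ⟨j, hj⟩
      simp only [Function.update_self] at h6
      rw [h]
      omega
    · have h6 := congrFun heq i
      rwa [Function.update_of_ne h, Function.update_of_ne h] at h6
  · intro f hf
    simp only [Finset.coe_filter, Set.mem_setOf_eq] at hf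
    obtain ⟨hfpi, hfc, hfj⟩ := hf
    have hback : Function.update (Function.update f ⟨j, hj⟩ (f ⟨j, hj⟩ - 1)) ⟨j, hj⟩
        ((Function.update f ⟨j, hj⟩ (f ⟨j, hj⟩ - 1)) ⟨j, hj⟩ + 1) = f := by
      funext i
      by_cases h : i = (⟨j, hj⟩ : Fin D)
      · subst h
        simp only [Function.update_self]
        omega
      · simp only [Function.update_of_ne h]
    have hc : ∑ i, Function.update f ⟨j, hj⟩ (f ⟨j, hj⟩ - 1) i * (2 * (i : ℕ) + 1) =
        n - 1 - 2 * j := by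
      have h7 := update_add_sum ⟨j, hj⟩ (Function.update f ⟨j, hj⟩ (f ⟨j, hj⟩ - 1)) 1
        (fun i => 2 * (i : ℕ) + 1)
      rw [hback] at h7
      have h5 : ((⟨j, hj⟩ : Fin D) : ℕ) = j := rfl
      simp only [h5] at h7
      omega
    exact ⟨Function.update f ⟨j, hj⟩ (f ⟨j, hj⟩ - 1),
      Finset.mem_coe.2 (Finset.mem_filter.2 ⟨mem_pi_of_constraint (by omega) _ hc, hc⟩), hback⟩
  · intro f hf
    simp only [Finset.mem_filter] at hf
    beta_reduce
    have hk : ∑ i, Function.update f ⟨j, hj⟩ (f ⟨j, hj⟩ + 1) i * ((i : ℕ) + 1) =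
        (∑ i, f i * ((i : ℕ) + 1)) + (j + 1) := by
      have h7 := update_add_sum ⟨j, hj⟩ f 1 (fun i => (i : ℕ) + 1)
      beta_reduce at h7
      have h5 : ((⟨j, hj⟩ : Fin D) : ℕ) = j := rfl
      simp only [h5] at h7
      omega
    have hone : ∑ i, Function.update f ⟨j, hj⟩ (f ⟨j, hj⟩ + 1) i * 1 =
        (∑ i, f i * 1) + 1 := by
      have h7 := update_add_sum ⟨j, hj⟩ f 1 (fun _ => 1)
      beta_reduce at h7
      omega
    have hq : ∑ i, Function.update f ⟨j, hj⟩ (f ⟨j, hj⟩ + 1) i = (∑ i, f i) + 1 := by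
      simpa using hone
    have hfac := update_fact_prod ⟨j, hj⟩ f
    have hpow := update_pow_prod B ⟨j, hj⟩ f
    have hFjj : Function.update f ⟨j, hj⟩ (f ⟨j, hj⟩ + 1) ⟨j, hj⟩ = f ⟨j, hj⟩ + 1 :=
      Function.update_self _ _ _
    have e1 : m + 1 + j + (∑ i, f i * ((i : ℕ) + 1)) - 1 =
        m + ((∑ i, f i * ((i : ℕ) + 1)) + (j + 1)) - 1 := by omega
    have e2 : m + 1 + j + (∑ i, f i * ((i : ℕ) + 1)) - (∑ i, f i) =
        m + 1 + ((∑ i, f i * ((i : ℕ) + 1)) + (j + 1)) - ((∑ i, f i) + 1) := by omega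
    rw [wgt, hk, hq, hfac, hpow, hFjj, e1, e2]
    have h5 : ((⟨j, hj⟩ : Fin D) : ℕ) = j := rfl
    simp only [h5]
    have hfz : ((f ⟨j, hj⟩ : ℚ) + 1) ≠ 0 := by positivity
    have hPz : (∏ i : Fin D, ((f i).factorial : ℚ)) ≠ 0 := by
      refine Finset.prod_ne_zero_iff.2 fun i _ => ?_
      exact_mod_cast (Nat.factorial_pos (f i)).ne'
    have hTz : ((m + 1 + ((∑ i, f i * ((i : ℕ) + 1)) + (j + 1)) -
        ((∑ i, f i) + 1)).factorial : ℚ) ≠ 0 := by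
      exact_mod_cast (Nat.factorial_pos _).ne'
    push_cast
    field_simp

lemma keyid (B : PowerSeries ℚ) {D : ℕ} (n m : ℕ) (hn : 1 ≤ n) (f : Fin D → ℕ)
    (hf : ∑ i, f i * (2 * (i : ℕ) + 1) = n) :
    wgt B (m + 1) f = wgt B m f +
      ∑ jj : Fin D, (if 1 ≤ f jj then
        (f jj : ℚ) * ((m : ℚ) + 1 + (jj : ℕ)) *
          (((m + (∑ i, f i * ((i : ℕ) + 1)) - 1).factorial : ℚ) /
            ((∏ i : Fin D, ((f i).factorial : ℚ)) *
              ((m + 1 + (∑ i, f i * ((i : ℕ) + 1)) - ∑ i, f i).factorial : ℚ)) *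
            ∏ i : Fin D, (coeff (i : ℕ) B) ^ f i)
      else 0) := by
  set k := ∑ i, f i * ((i : ℕ) + 1) with hk
  set q := ∑ i, f i with hq
  set P := ∏ i : Fin D, ((f i).factorial : ℚ) with hP
  set Pi := ∏ i : Fin D, (coeff (i : ℕ) B) ^ f i with hPi
  have hq1 : 1 ≤ q := by
    rw [hq]
    by_contra h
    have hz : ∀ i : Fin D, f i = 0 := by
      intro i
      have h0 : ∑ i, f i = 0 := by omega
      exact Finset.sum_eq_zero_iff.1 h0 i (Finset.mem_univ i)
    have : ∑ i, f i * (2 * (i : ℕ) + 1) = 0 :=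
      Finset.sum_eq_zero fun i _ => by rw [hz i]; ring
    omega
  have hqk : q ≤ k := by
    rw [hq, hk]
    exact Finset.sum_le_sum fun i _ => Nat.le_mul_of_pos_right _ (by omega)
  -- simplify the ite sum
  have hA : ∀ jj : Fin D, (if 1 ≤ f jj then
        (f jj : ℚ) * ((m : ℚ) + 1 + (jj : ℕ)) *
          (((m + k - 1).factorial : ℚ) / (P * ((m + 1 + k - q).factorial : ℚ)) * Pi)
      else 0) =
      (f jj : ℚ) * ((m : ℚ) + 1 + (jj : ℕ)) *
        (((m + k - 1).factorial : ℚ) / (P * ((m + 1 + k - q).factorial : ℚ)) * Pi) := by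
    intro jj
    by_cases h : 1 ≤ f jj
    · rw [if_pos h]
    · rw [if_neg h]
      have : f jj = 0 := by omega
      rw [this]
      push_cast
      ring
  rw [Finset.sum_congr rfl fun jj _ => hA jj]
  have hB : ∑ jj : Fin D, (f jj : ℚ) * ((m : ℚ) + 1 + (jj : ℕ)) *
        (((m + k - 1).factorial : ℚ) / (P * ((m + 1 + k - q).factorial : ℚ)) * Pi) =
      ((q * m + k : ℕ) : ℚ) *
        (((m + k - 1).factorial : ℚ) / (P * ((m + 1 + k - q).factorial : ℚ)) * Pi) := by
    rw [← Finset.sum_mul]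
    congr 1
    have hterm : ∀ jj : Fin D, (f jj : ℚ) * ((m : ℚ) + 1 + (jj : ℕ)) =
        ((f jj * m + f jj * ((jj : ℕ) + 1) : ℕ) : ℚ) := by
      intro jj; push_cast; ring
    rw [Finset.sum_congr rfl fun jj _ => hterm jj, ← Nat.cast_sum]
    congr 1
    rw [Finset.sum_add_distrib, ← Finset.sum_mul]
  rw [hB]
  -- the main scalar identity
  obtain ⟨c, hc⟩ : ∃ c, k = q + c := ⟨k - q, by omega⟩
  have e1 : m + 1 + k - 1 = m + k := by omega
  have e2 : m + 1 + k - q = m + c + 1 := by omega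
  have e3 : m + k - q = m + c := by omega
  have fact1 : (m + k).factorial = (m + k) * (m + k - 1).factorial :=
    (Nat.mul_factorial_pred (by omega)).symm
  have fact2 : (m + c + 1).factorial = (m + c + 1) * (m + c).factorial :=
    Nat.factorial_succ _
  rw [wgt, wgt, ← hk, ← hq, ← hP, ← hPi, e1, e2, e3, fact1, fact2]
  have hPz : P ≠ 0 := by
    rw [hP]
    refine Finset.prod_ne_zero_iff.2 fun i _ => ?_
    exact_mod_cast (Nat.factorial_pos (f i)).ne'
  have hAz : ((m + c).factorial : ℚ) ≠ 0 := by
    exact_mod_cast (Nat.factorial_pos _).ne'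
  have hm1 : ((m : ℚ) + (c : ℚ) + 1) ≠ 0 := by positivity
  push_cast [hc]
  field_simp
  ring

lemma U_rec (B : PowerSeries ℚ) (n m : ℕ) (hn : 1 ≤ n) :
    U B ((n - 1) / 2 + 1) n n (m + 1) =
      U B ((n - 1) / 2 + 1) n n m +
        ∑ j ∈ Finset.range ((n - 1) / 2 + 1),
          coeff j B * U B ((n - 1) / 2 + 1) n (n - 1 - 2 * j) (m + 1 + j) := by
  have hrange : ∑ j ∈ Finset.range ((n - 1) / 2 + 1),
        coeff j B * U B ((n - 1) / 2 + 1) n (n - 1 - 2 * j) (m + 1 + j) =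
      ∑ jj : Fin ((n - 1) / 2 + 1),
        coeff (jj : ℕ) B * U B ((n - 1) / 2 + 1) n (n - 1 - 2 * (jj : ℕ)) (m + 1 + (jj : ℕ)) := by
    exact (Fin.sum_univ_eq_sum_range
      (fun j => coeff j B * U B ((n - 1) / 2 + 1) n (n - 1 - 2 * j) (m + 1 + j)) _).symm
  rw [hrange]
  have hstep : ∀ jj : Fin ((n - 1) / 2 + 1),
      coeff (jj : ℕ) B * U B ((n - 1) / 2 + 1) n (n - 1 - 2 * (jj : ℕ)) (m + 1 + (jj : ℕ)) =
      ∑ f ∈ Finset.filter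
          (fun f : Fin ((n - 1) / 2 + 1) → ℕ => ∑ i, f i * (2 * (i : ℕ) + 1) = n)
          (Fintype.piFinset fun _ => Finset.range (n + 1)),
        (if 1 ≤ f ⟨(jj : ℕ), jj.isLt⟩ then
          (f ⟨(jj : ℕ), jj.isLt⟩ : ℚ) * ((m : ℚ) + 1 + (jj : ℕ)) *
            (((m + (∑ i, f i * ((i : ℕ) + 1)) - 1).factorial : ℚ) /
              ((∏ i : Fin ((n - 1) / 2 + 1), ((f i).factorial : ℚ)) *
                ((m + 1 + (∑ i, f i * ((i : ℕ) + 1)) - ∑ i, f i).factorial : ℚ)) *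
              ∏ i : Fin ((n - 1) / 2 + 1), (coeff (i : ℕ) B) ^ f i)
        else 0) := by
    intro jj
    refine step1 B n m (jj : ℕ) jj.isLt ?_
    have := jj.isLt
    omega
  rw [Finset.sum_congr rfl fun jj _ => hstep jj]
  rw [Finset.sum_comm]
  rw [U, U, ← Finset.sum_add_distrib]
  refine Finset.sum_congr rfl fun f hf => ?_
  simp only [Finset.mem_filter] at hf
  have hkey := keyid B n m hn f hf.2
  simp only [Fin.eta]
  exact hkey

lemma coeff_mul_pscomp (B g h : PowerSeries ℚ) (N : ℕ) :
    coeff N (h * pscomp B (X ^ 2 * g)) =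
      ∑ j ∈ Finset.range (N / 2 + 1), coeff j B * coeff (N - 2 * j) (h * g ^ j) := by
  have hco : ∀ j : ℕ, coeff N (h * (X ^ 2 * g) ^ j) =
      if 2 * j ≤ N then coeff (N - 2 * j) (h * g ^ j) else 0 := by
    intro j
    have hrw : h * (X ^ 2 * g) ^ j = (h * g ^ j) * X ^ (2 * j) := by
      rw [mul_pow, ← pow_mul]
      ring
    rw [hrw, PowerSeries.coeff_mul_X_pow']
  have hps : ∀ p ∈ Finset.HasAntidiagonal.antidiagonal N, coeff p.1 h * coeff p.2 (pscomp B (X ^ 2 * g)) =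
      ∑ j ∈ Finset.range (N + 1),
        coeff j B * (coeff p.1 h * coeff p.2 ((X ^ 2 * g) ^ j)) := by
    intro p hp
    have hp2 : p.2 ≤ N := by
      have := Finset.HasAntidiagonal.mem_antidiagonal.1 hp
      omega
    have hext : coeff p.2 (pscomp B (X ^ 2 * g)) =
        ∑ j ∈ Finset.range (N + 1), coeff j B * coeff p.2 ((X ^ 2 * g) ^ j) := by
      rw [pscomp, coeff_mk]
      refine Finset.sum_subset (Finset.range_subset_range.2 (by omega)) ?_
      intro j hjN hj
      have hj2 : p.2 < j := by
        simp only [Finset.mem_range] at hjN hj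
        omega
      have hz : coeff p.2 ((X ^ 2 * g) ^ j) = 0 := by
        have hrw : (X ^ 2 * g : PowerSeries ℚ) ^ j = (g ^ j) * X ^ (2 * j) := by
          rw [mul_pow, ← pow_mul]
          ring
        rw [hrw, PowerSeries.coeff_mul_X_pow', if_neg (by omega)]
      rw [hz]
      ring
    rw [hext, Finset.mul_sum]
    refine Finset.sum_congr rfl fun j _ => by ring
  rw [PowerSeries.coeff_mul, Finset.sum_congr rfl hps, Finset.sum_comm]
  have hinner : ∀ j ∈ Finset.range (N + 1),
      ∑ p ∈ Finset.HasAntidiagonal.antidiagonal N, coeff j B * (coeff p.1 h * coeff p.2 ((X ^ 2 * g) ^ j)) =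
      coeff j B * (if 2 * j ≤ N then coeff (N - 2 * j) (h * g ^ j) else 0) := by
    intro j _
    rw [← Finset.mul_sum, ← PowerSeries.coeff_mul, hco j]
  rw [Finset.sum_congr rfl hinner]
  have hsub : ∑ j ∈ Finset.range (N + 1),
        coeff j B * (if 2 * j ≤ N then coeff (N - 2 * j) (h * g ^ j) else 0) =
      ∑ j ∈ Finset.range (N / 2 + 1),
        coeff j B * (if 2 * j ≤ N then coeff (N - 2 * j) (h * g ^ j) else 0) := by
    refine (Finset.sum_subset (Finset.range_subset_range.2 (by omega)) ?_).symm
    intro j hjN hj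
    simp only [Finset.mem_range] at hjN hj
    rw [if_neg (by omega)]
    ring
  rw [hsub]
  refine Finset.sum_congr rfl fun j hj => ?_
  simp only [Finset.mem_range] at hj
  rw [if_pos (by omega)]

lemma coeff_pow_succ (B g : PowerSeries ℚ)
    (hg : g = 1 + X * g * pscomp B (X ^ 2 * g)) (n m : ℕ) (hn : 1 ≤ n) :
    coeff n (g ^ (m + 1)) = coeff n (g ^ m) +
      ∑ j ∈ Finset.range ((n - 1) / 2 + 1),
        coeff j B * coeff (n - 1 - 2 * j) (g ^ (m + 1 + j)) := by
  obtain ⟨n', rfl⟩ : ∃ n', n = n' + 1 := ⟨n - 1, by omega⟩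
  have heq : g ^ (m + 1) = g ^ m + X * (g ^ (m + 1) * pscomp B (X ^ 2 * g)) := by
    calc g ^ (m + 1) = g ^ m * g := pow_succ g m
      _ = g ^ m * (1 + X * g * pscomp B (X ^ 2 * g)) := by rw [← hg]
      _ = g ^ m + X * (g ^ (m + 1) * pscomp B (X ^ 2 * g)) := by ring
  rw [heq, map_add, PowerSeries.coeff_succ_X_mul,
    coeff_mul_pscomp B g (g ^ (m + 1)) n']
  simp only [Nat.add_sub_cancel]
  congr 1
  refine Finset.sum_congr rfl fun j _ => ?_
  rw [← pow_add]

lemma U_n0 (B : PowerSeries ℚ) (m : ℕ) (hm : 1 ≤ m) : U B 1 0 0 m = 1 := by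
  unfold U
  have hset : Finset.filter (fun f : Fin 1 → ℕ => ∑ i, f i * (2 * (i : ℕ) + 1) = 0)
      (Fintype.piFinset fun _ => Finset.range 1) = {fun _ => 0} := by
    ext f
    simp only [Finset.mem_filter, Fintype.mem_piFinset, Finset.mem_range,
      Finset.mem_singleton, Fin.sum_univ_one]
    constructor
    · rintro ⟨h1, h2⟩
      funext i
      have : i = 0 := Subsingleton.elim _ _
      subst this
      omega
    · rintro rfl
      simp
  rw [hset, Finset.sum_singleton, wgt]
  simp only [Fin.sum_univ_one, Fin.prod_univ_one, zero_mul, Nat.factorial_zero, pow_zero,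
    Nat.cast_one, Nat.add_zero, Nat.sub_zero, mul_one, one_mul, add_zero]
  have hfac : (m : ℚ) * ((m - 1).factorial : ℚ) = (m.factorial : ℚ) := by
    exact_mod_cast congrArg (Nat.cast (R := ℚ)) (Nat.mul_factorial_pred (by omega))
  have hne : ((m.factorial : ℚ)) ≠ 0 := by exact_mod_cast (Nat.factorial_pos m).ne'
  field_simp
  linarith [hfac]

lemma main_lemma (B g : PowerSeries ℚ) (hg0 : constantCoeff g = 1)
    (hg : g = 1 + X * g * pscomp B (X ^ 2 * g)) :
    ∀ n m : ℕ, 1 ≤ m → coeff n (g ^ m) = U B ((n - 1) / 2 + 1) n n m := by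
  intro n
  induction n using Nat.strong_induction_on with
  | _ n IH =>
    rcases Nat.eq_zero_or_pos n with hn0 | hn1
    · subst hn0
      intro m hm
      rw [U_n0 B m hm]
      rw [PowerSeries.coeff_zero_eq_constantCoeff, map_pow, hg0, one_pow]
    · have aux : ∀ m : ℕ, coeff n (g ^ m) = U B ((n - 1) / 2 + 1) n n m := by
        intro m
        induction m with
        | zero =>
          rw [pow_zero, U_zero, PowerSeries.coeff_one, if_neg (by omega)]
        | succ m ihm =>
          rw [coeff_pow_succ B g hg n m (by omega), ihm, U_rec B n m (by omega)]
          congr 1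
          refine Finset.sum_congr rfl fun j hj => ?_
          have hj' : j < (n - 1) / 2 + 1 := Finset.mem_range.1 hj
          have hlt : n - 1 - 2 * j < n := by omega
          rw [IH (n - 1 - 2 * j) hlt (m + 1 + j) (by omega)]
          congr 1
          exact U_ext B (m + 1 + j) (by omega) (by omega) le_rfl (by omega)
      exact fun m _ => aux m

theorem stmt_11 (B g : PowerSeries ℚ) (hg0 : constantCoeff g = 1)
    (hg : g = 1 + X * g * pscomp B (X ^ 2 * g)) :
    ∀ n m : ℕ, 1 ≤ m →
      coeff n (g ^ m) =
        ∑ f ∈ Finset.filter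
            (fun f : Fin ((n - 1) / 2 + 1) → ℕ => ∑ i, f i * (2 * (i : ℕ) + 1) = n)
            (Fintype.piFinset fun _ => Finset.range (n + 1)),
          (let k := ∑ i, f i * ((i : ℕ) + 1)
           let q := ∑ i, f i
           (m : ℚ) * (m + k - 1).factorial /
             ((∏ i, ((f i).factorial : ℚ)) * (m + k - q).factorial)) *
          ∏ i : Fin ((n - 1) / 2 + 1), (coeff (i : ℕ) B) ^ f i := by
  intro n m hm
  rw [main_lemma B g hg0 hg n m hm]
  rfl
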